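/- Under the random effects model with naive independent reweighting (W_i i.i.d. with mean 1, variance τ²), the expected delta-method bootstrap variance (1/N²)E_RE E_W((T* − X̄N*)²), with T* = ∑_i W_i Z_i X_i and N* = ∑_i W_i Z_i, equals (τ²/N)∑_{u≠∅} σ²_u (1 − ν_u/N). -/

import Mathlib

open scoped BigOperators

private lemma lin_sum {Ω ι : Type*} (E : (Ω → ℝ) →ₗ[ℝ] ℝ) (s : Finset ι) (f : ι → Ω → ℝ) :
    E (fun ω => ∑ i ∈ s, f i ω) = ∑ i ∈ s, E (f i) := by
  rw [show (fun ω => ∑ i ∈ s, f i ω) = ∑ i ∈ s, f i by funext ω; simp]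
  exact map_sum E f s

private lemma lin_cmul {Ω : Type*} (E : (Ω → ℝ) →ₗ[ℝ] ℝ) (c : ℝ) (f : Ω → ℝ) :
    E (fun ω => c * f ω) = c * E f := by
  have h : (fun ω => c * f ω) = c • f := rfl
  rw [h, map_smul, smul_eq_mul]

private lemma lin_comb {Ω : Type*} (E : (Ω → ℝ) →ₗ[ℝ] ℝ) (f g h : Ω → ℝ) :
    E (fun ω => f ω - 2 * g ω + h ω) = E f - 2 * E g + E h := by
  have h1 : (fun ω => f ω - 2 * g ω + h ω) = f - (2:ℝ) • g + h := by
    funext ω; simp [smul_eq_mul]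
  rw [h1, map_add, map_sub, map_smul, smul_eq_mul]

/-- Theorem 3 (naive reweighting): with i.i.d. weights of mean 1 and variance `τ²`
(independent of the data), the expected delta-method bootstrap variance
`(1/N²) E_RE E_W((T* − X̄ N*)²)` equals `(τ²/N) ∑_{u≠∅} σ²_u (1 − ν_u/N)`. -/
theorem stmt11 {r : ℕ} (hr : 1 ≤ r) {ΩX ΩW : Type*}
    (EX : (ΩX → ℝ) →ₗ[ℝ] ℝ) (hEX1 : EX (fun _ => 1) = 1)
    (EW : (ΩW → ℝ) →ₗ[ℝ] ℝ) (hEW1 : EW (fun _ => 1) = 1)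
    (Z : (Fin r → ℕ) → ℝ)
    (hZ01 : ∀ i, Z i = 0 ∨ Z i = 1)
    (hZfin : (Function.support Z).Finite)
    (N : ℝ) (hN : N = ∑ᶠ i, Z i) (hNpos : 0 < N)
    (μ : ℝ) (σ2 : Finset (Fin r) → ℝ) (τ2 : ℝ)
    (ε : (Fin r → ℕ) → Finset (Fin r) → ΩX → ℝ)
    (hdep : ∀ i i' u, (∀ j ∈ u, i j = i' j) → ε i u = ε i' u)
    (hmean : ∀ i u, u.Nonempty → EX (ε i u) = 0)
    (hcov : ∀ i i' u u', u.Nonempty → u'.Nonempty →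
      EX (fun ω => ε i u ω * ε i' u' ω)
        = σ2 u * (if u = u' ∧ ∀ j ∈ u, i j = i' j then (1 : ℝ) else 0))
    (X : (Fin r → ℕ) → ΩX → ℝ)
    (hX : ∀ i ω, X i ω = μ + ∑ u ∈ Finset.univ.erase (∅ : Finset (Fin r)), ε i u ω)
    (Xbar : ΩX → ℝ)
    (hXbar : ∀ ω, Xbar ω = (1 / N) * ∑ᶠ i, Z i * X i ω)
    (Nmatch : (Fin r → ℕ) → Finset (Fin r) → ℝ)
    (hNmatch : ∀ i u, Nmatch i u
      = ∑ᶠ i', Z i' * (if ∀ j ∈ u, i j = i' j then (1 : ℝ) else 0))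
    (ν : Finset (Fin r) → ℝ)
    (hν : ∀ u, ν u = (1 / N) * ∑ᶠ i, Z i * Nmatch i u)
    (W : (Fin r → ℕ) → ΩW → ℝ)
    (hWmean : ∀ i, EW (W i) = 1)
    (hWcov : ∀ i i', EW (fun ω => W i ω * W i' ω)
        = 1 + τ2 * (if i = i' then (1 : ℝ) else 0)) :
    (1 / N ^ 2) * EX (fun ωx => EW (fun ωw =>
        ((∑ᶠ i, W i ωw * Z i * X i ωx) - Xbar ωx * ∑ᶠ i, W i ωw * Z i) ^ 2))
      = (τ2 / N) * ∑ u ∈ Finset.univ.erase (∅ : Finset (Fin r)),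
          σ2 u * (1 - ν u / N) := by
  classical
  set S : Finset (Fin r → ℕ) := hZfin.toFinset with hS
  have hfin : ∀ g : (Fin r → ℕ) → ℝ, (∀ i, Z i = 0 → g i = 0) →
      ∑ᶠ i, g i = ∑ i ∈ S, g i := by
    intro g hg
    apply finsum_eq_finset_sum_of_support_subset
    intro i hi
    have hz : Z i ≠ 0 := fun h => hi (hg i h)
    simpa [hS] using hz
  have hNS : N = ∑ i ∈ S, Z i := by
    rw [hN]; exact hfin Z (fun i h => h)
  have hN0 : N ≠ 0 := ne_of_gt hNpos
  set U := Finset.univ.erase (∅ : Finset (Fin r)) with hU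
  have hUne : ∀ u ∈ U, Finset.Nonempty u := fun u hu =>
    Finset.nonempty_iff_ne_empty.2 (Finset.mem_erase.mp hu).1
  set A : (Fin r → ℕ) → ΩX → ℝ := fun i ω => ∑ u ∈ U, ε i u ω with hA
  set B : ΩX → ℝ := fun ω => (1 / N) * ∑ i ∈ S, Z i * A i ω with hB
  have hXA : ∀ i ω, X i ω = μ + A i ω := fun i ω => hX i ω
  have hZXsum : ∀ ω, ∑ i ∈ S, Z i * X i ω = N * Xbar ω := by
    intro ω
    rw [hXbar ω, hfin _ (fun i h => by rw [h]; ring)]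
    field_simp
  have hXbar' : ∀ ω, Xbar ω = μ + B ω := by
    intro ω
    have h1 : ∑ i ∈ S, Z i * X i ω = N * μ + ∑ i ∈ S, Z i * A i ω := by
      rw [hNS, Finset.sum_mul, ← Finset.sum_add_distrib]
      exact Finset.sum_congr rfl (fun i _ => by rw [hXA]; ring)
    rw [hXbar ω, hfin _ (fun i h => by rw [h]; ring), h1, hB]
    field_simp
  -- expectation of products of the A's
  have hM : ∀ i i', EX (fun ω => A i ω * A i' ω)
      = ∑ u ∈ U, σ2 u * (if ∀ j ∈ u, i j = i' j then (1:ℝ) else 0) := by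
    intro i i'
    have h1 : (fun ω => A i ω * A i' ω)
        = fun ω => ∑ u ∈ U, ∑ u' ∈ U, ε i u ω * ε i' u' ω := by
      funext ω; simp only [hA]; rw [Finset.sum_mul_sum]
    rw [h1, lin_sum]
    refine Finset.sum_congr rfl fun u hu => ?_
    rw [lin_sum,
      Finset.sum_congr rfl fun u' hu' => hcov i i' u u' (hUne u hu) (hUne u' hu')]
    by_cases hm : ∀ j ∈ u, i j = i' j
    · simp only [eq_true hm, and_true, if_true]
      rw [← Finset.mul_sum, Finset.sum_ite_eq]
      simp [hu]
    · simp [hm]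
  have hMii : ∀ i, EX (fun ω => A i ω * A i ω) = ∑ u ∈ U, σ2 u := by
    intro i; rw [hM]
    refine Finset.sum_congr rfl fun u _ => ?_
    simp
  have hNmS : ∀ i u, Nmatch i u
      = ∑ i' ∈ S, Z i' * (if ∀ j ∈ u, i j = i' j then (1:ℝ) else 0) := by
    intro i u; rw [hNmatch]
    exact hfin _ (fun i' h => by rw [h]; ring)
  have hνS : ∀ u, ∑ i ∈ S, Z i * Nmatch i u = N * ν u := by
    intro u; rw [hν u, hfin _ (fun i h => by rw [h]; ring)]
    field_simp
  have hMi : ∀ i, ∑ i' ∈ S, Z i' * EX (fun ω => A i ω * A i' ω)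
      = ∑ u ∈ U, σ2 u * Nmatch i u := by
    intro i
    calc ∑ i' ∈ S, Z i' * EX (fun ω => A i ω * A i' ω)
        = ∑ i' ∈ S, ∑ u ∈ U,
            σ2 u * (Z i' * (if ∀ j ∈ u, i j = i' j then (1:ℝ) else 0)) := by
          refine Finset.sum_congr rfl fun i' _ => ?_
          rw [hM, Finset.mul_sum]
          exact Finset.sum_congr rfl fun u _ => by ring
      _ = ∑ u ∈ U, ∑ i' ∈ S,
            σ2 u * (Z i' * (if ∀ j ∈ u, i j = i' j then (1:ℝ) else 0)) :=
          Finset.sum_comm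
      _ = ∑ u ∈ U, σ2 u * Nmatch i u := by
          refine Finset.sum_congr rfl fun u _ => ?_
          rw [hNmS, Finset.mul_sum]
  have hZC : ∑ i' ∈ S, Z i' * ∑ u ∈ U, σ2 u * Nmatch i' u
      = N * ∑ u ∈ U, σ2 u * ν u := by
    calc ∑ i' ∈ S, Z i' * ∑ u ∈ U, σ2 u * Nmatch i' u
        = ∑ i' ∈ S, ∑ u ∈ U, σ2 u * (Z i' * Nmatch i' u) := by
          refine Finset.sum_congr rfl fun i' _ => ?_
          rw [Finset.mul_sum]
          exact Finset.sum_congr rfl fun u _ => by ring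
      _ = ∑ u ∈ U, ∑ i' ∈ S, σ2 u * (Z i' * Nmatch i' u) := Finset.sum_comm
      _ = ∑ u ∈ U, σ2 u * (N * ν u) := by
          refine Finset.sum_congr rfl fun u _ => ?_
          rw [← Finset.mul_sum, hνS]
      _ = N * ∑ u ∈ U, σ2 u * ν u := by
          rw [Finset.mul_sum]
          exact Finset.sum_congr rfl fun u _ => by ring
  have hAB : ∀ i, EX (fun ω => A i ω * B ω)
      = (1/N) * ∑ u ∈ U, σ2 u * Nmatch i u := by
    intro i
    have h1 : (fun ω => A i ω * B ω)
        = fun ω => ∑ i' ∈ S, ((1/N) * Z i') * (A i ω * A i' ω) := by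
      funext ω
      simp only [hB, Finset.mul_sum]
      exact Finset.sum_congr rfl fun i' _ => by ring
    rw [h1, lin_sum, ← hMi i, Finset.mul_sum]
    exact Finset.sum_congr rfl fun i' _ => by
      rw [lin_cmul EX (1/N * Z i') (fun ω => A i ω * A i' ω)]; ring
  have hBB : EX (fun ω => B ω * B ω) = (1/N) * ∑ u ∈ U, σ2 u * ν u := by
    have h1 : (fun ω => B ω * B ω)
        = fun ω => ∑ i' ∈ S, ∑ i'' ∈ S,
            ((1/N) * Z i' * ((1/N) * Z i'')) * (A i' ω * A i'' ω) := by
      funext ω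
      simp only [hB, Finset.mul_sum, Finset.sum_mul]
      exact Finset.sum_congr rfl fun i' _ =>
        Finset.sum_congr rfl fun i'' _ => by ring
    rw [h1, lin_sum]
    have h2 : ∀ i' ∈ S, EX (fun ω => ∑ i'' ∈ S,
        ((1/N) * Z i' * ((1/N) * Z i'')) * (A i' ω * A i'' ω))
        = (1/N) * (1/N) * (Z i' * ∑ u ∈ U, σ2 u * Nmatch i' u) := by
      intro i' _
      rw [lin_sum, ← hMi i', Finset.mul_sum, Finset.mul_sum]
      exact Finset.sum_congr rfl fun i'' _ => by
        rw [lin_cmul EX (1/N * Z i' * (1/N * Z i'')) (fun ω => A i' ω * A i'' ω)]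
        ring
    rw [Finset.sum_congr rfl h2, ← Finset.mul_sum, hZC]
    field_simp
  have hY2 : ∀ i, EX (fun ω => (X i ω - Xbar ω)^2)
      = (∑ u ∈ U, σ2 u) - 2 * ((1/N) * ∑ u ∈ U, σ2 u * Nmatch i u)
        + (1/N) * ∑ u ∈ U, σ2 u * ν u := by
    intro i
    have h1 : (fun ω => (X i ω - Xbar ω)^2)
        = fun ω => (A i ω * A i ω) - 2 * (A i ω * B ω) + B ω * B ω := by
      funext ω; rw [hXA, hXbar']; ring
    rw [h1, lin_comb EX (fun ω => A i ω * A i ω) (fun ω => A i ω * B ω)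
      (fun ω => B ω * B ω), hMii, hAB, hBB]
  -- the W-expectation
  have key1 : ∀ ωx, EW (fun ωw =>
      ((∑ᶠ i, W i ωw * Z i * X i ωx) - Xbar ωx * ∑ᶠ i, W i ωw * Z i) ^ 2)
      = τ2 * ∑ i ∈ S, Z i * (X i ωx - Xbar ωx)^2 := by
    intro ωx
    set c : (Fin r → ℕ) → ℝ := fun i => Z i * (X i ωx - Xbar ωx) with hc
    have e1 : ∀ ωw, (∑ᶠ i, W i ωw * Z i * X i ωx) - Xbar ωx * ∑ᶠ i, W i ωw * Z i
        = ∑ i ∈ S, c i * W i ωw := by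
      intro ωw
      rw [hfin _ (fun i h => by rw [h]; ring), hfin _ (fun i h => by rw [h]; ring),
        Finset.mul_sum, ← Finset.sum_sub_distrib]
      exact Finset.sum_congr rfl fun i _ => by simp only [hc]; ring
    have e2 : (fun ωw =>
        ((∑ᶠ i, W i ωw * Z i * X i ωx) - Xbar ωx * ∑ᶠ i, W i ωw * Z i) ^ 2)
        = fun ωw => ∑ i ∈ S, ∑ i' ∈ S, (c i * c i') * (W i ωw * W i' ωw) := by
      funext ωw
      rw [e1, sq, Finset.sum_mul_sum]
      exact Finset.sum_congr rfl fun i _ =>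
        Finset.sum_congr rfl fun i' _ => by ring
    rw [e2, lin_sum]
    have e4 : ∀ i ∈ S, EW (fun ωw => ∑ i' ∈ S, (c i * c i') * (W i ωw * W i' ωw))
        = ∑ i' ∈ S, (c i * c i') * (1 + τ2 * (if i = i' then (1:ℝ) else 0)) := by
      intro i _
      rw [lin_sum]
      exact Finset.sum_congr rfl fun i' _ => by rw [lin_cmul, hWcov]
    rw [Finset.sum_congr rfl e4]
    have hc0 : ∑ i ∈ S, c i = 0 := by
      have h1 : ∑ i ∈ S, c i
          = (∑ i ∈ S, Z i * X i ωx) - (∑ i ∈ S, Z i) * Xbar ωx := by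
        rw [Finset.sum_mul, ← Finset.sum_sub_distrib]
        exact Finset.sum_congr rfl fun i _ => by simp only [hc]; ring
      rw [h1, hZXsum, ← hNS]; ring
    calc ∑ i ∈ S, ∑ i' ∈ S, (c i * c i') * (1 + τ2 * (if i = i' then (1:ℝ) else 0))
        = ∑ i ∈ S, (c i * (∑ i' ∈ S, c i') + τ2 * (c i * c i)) := by
          refine Finset.sum_congr rfl fun i hi => ?_
          have h2 : ∑ i' ∈ S, (c i * c i') * (1 + τ2 * (if i = i' then (1:ℝ) else 0))
              = ∑ i' ∈ S, (c i * c i' + τ2 * (if i = i' then c i * c i' else 0)) :=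
            Finset.sum_congr rfl fun i' _ => by split_ifs <;> ring
          rw [h2, Finset.sum_add_distrib, ← Finset.mul_sum, ← Finset.mul_sum,
            Finset.sum_ite_eq, if_pos hi]
      _ = τ2 * ∑ i ∈ S, c i * c i := by
          rw [hc0, Finset.mul_sum]
          exact Finset.sum_congr rfl fun i _ => by ring
      _ = τ2 * ∑ i ∈ S, Z i * (X i ωx - Xbar ωx)^2 := by
          congr 1
          refine Finset.sum_congr rfl fun i _ => ?_
          simp only [hc]
          rcases hZ01 i with h | h <;> rw [h] <;> ring
  have main1 : (fun ωx => EW (fun ωw =>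
      ((∑ᶠ i, W i ωw * Z i * X i ωx) - Xbar ωx * ∑ᶠ i, W i ωw * Z i) ^ 2))
      = fun ωx => τ2 * ∑ i ∈ S, Z i * (X i ωx - Xbar ωx)^2 := funext key1
  rw [main1, lin_cmul EX τ2 (fun ωx => ∑ i ∈ S, Z i * (X i ωx - Xbar ωx)^2),
    lin_sum EX S (fun i ωx => Z i * (X i ωx - Xbar ωx)^2)]
  have main2 : ∀ i ∈ S, EX (fun ωx => Z i * (X i ωx - Xbar ωx)^2)
      = Z i * ((∑ u ∈ U, σ2 u) - 2 * ((1/N) * ∑ u ∈ U, σ2 u * Nmatch i u)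
        + (1/N) * ∑ u ∈ U, σ2 u * ν u) := by
    intro i _
    rw [lin_cmul EX (Z i) (fun ωx => (X i ωx - Xbar ωx)^2), hY2 i]
  rw [Finset.sum_congr rfl main2]
  have main3 : ∑ i ∈ S, Z i * ((∑ u ∈ U, σ2 u)
      - 2 * ((1/N) * ∑ u ∈ U, σ2 u * Nmatch i u) + (1/N) * ∑ u ∈ U, σ2 u * ν u)
      = (∑ u ∈ U, σ2 u) * N - (2/N) * (N * ∑ u ∈ U, σ2 u * ν u)
        + ((1/N) * ∑ u ∈ U, σ2 u * ν u) * N := by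
    have e : ∀ i ∈ S, Z i * ((∑ u ∈ U, σ2 u)
        - 2 * ((1/N) * ∑ u ∈ U, σ2 u * Nmatch i u) + (1/N) * ∑ u ∈ U, σ2 u * ν u)
        = (∑ u ∈ U, σ2 u) * Z i - (2/N) * (Z i * ∑ u ∈ U, σ2 u * Nmatch i u)
          + ((1/N) * ∑ u ∈ U, σ2 u * ν u) * Z i := fun i _ => by ring
    rw [Finset.sum_congr rfl e, Finset.sum_add_distrib, Finset.sum_sub_distrib,
      ← Finset.mul_sum, ← Finset.mul_sum, ← Finset.mul_sum, hZC, ← hNS]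
  rw [main3]
  have hRHS : ∑ u ∈ U, σ2 u * (1 - ν u / N)
      = (∑ u ∈ U, σ2 u) - (1/N) * ∑ u ∈ U, σ2 u * ν u := by
    have e : ∀ u ∈ U, σ2 u * (1 - ν u / N)
        = σ2 u - (1/N) * (σ2 u * ν u) := fun u _ => by field_simp
    rw [Finset.sum_congr rfl e, Finset.sum_sub_distrib, ← Finset.mul_sum]
  rw [hRHS]
  field_simp
  ring
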